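/- arXiv:2604.07330 — 10 statements merged into one kernel-verified Lean document; each statement's English description precedes it below -/
import Mathlib

section
/- The unfolded Laurent polynomial G is invariant under σ: σ(G) = G. -/
/-- The additive monoid homomorphism `e_l` sending an exponent vector
`u : Fin n →₀ ℤ` to `Σ_i u_i · δ_{(i, l mod d_i)}`. -/
noncomputable def unfoldExp (n : ℕ) (d : Fin n → ℕ) (l : ℕ) :
    (Fin n →₀ ℤ) →+ ((Σ i : Fin n, ZMod (d i)) →₀ ℤ) :=
  Finsupp.mapDomain.addMonoidHom fun i => (⟨i, (l : ZMod (d i))⟩ : Σ i : Fin n, ZMod (d i))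

/-- **Invariance of the unfolded Laurent polynomial under the shift `σ`.**
For a Laurent polynomial `f` in `n` variables over a commutative ring `R`, the unfolded
polynomial `G = Σ_{l=0}^{d-1} mapDomain(e_l)(f)` in the variables indexed by
`Y = Σ i, ZMod (d i)` satisfies `σ G = G`, where `σ` is induced by mapping each exponent
vector `v` to `mapDomain π v` for the shift `π (i, j) = (i, j + 1)`. -/
theorem unfolded_shift_invariant (n : ℕ) (hn : 1 ≤ n) (d : Fin n → ℕ) (hd : ∀ i, 0 < d i)
    (R : Type*) [CommRing R] (f : AddMonoidAlgebra R (Fin n →₀ ℤ)) :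
    Finsupp.mapDomain
        (fun v : (Σ i : Fin n, ZMod (d i)) →₀ ℤ =>
          Finsupp.mapDomain (fun y : Σ i : Fin n, ZMod (d i) => (⟨y.1, y.2 + 1⟩ : Σ i : Fin n, ZMod (d i))) v)
        (∑ l ∈ Finset.range (Finset.univ.lcm d), Finsupp.mapDomain (unfoldExp n d l) f.coeff) =
      ∑ l ∈ Finset.range (Finset.univ.lcm d), Finsupp.mapDomain (unfoldExp n d l) f.coeff := by
  classical
  set D := Finset.univ.lcm d with hD
  set π : (Σ i : Fin n, ZMod (d i)) → (Σ i : Fin n, ZMod (d i)) :=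
    fun y => ⟨y.1, y.2 + 1⟩ with hπ
  set g : ℕ → (((Σ i : Fin n, ZMod (d i)) →₀ ℤ) →₀ R) :=
    fun l => Finsupp.mapDomain (unfoldExp n d l) f.coeff with hg
  have key : ∀ l : ℕ,
      Finsupp.mapDomain (fun v => Finsupp.mapDomain π v) (g l) = g (l + 1) := by
    intro l
    rw [hg, ← Finsupp.mapDomain_comp]
    congr 1
    funext u
    simp only [Function.comp_apply, unfoldExp, Finsupp.mapDomain.addMonoidHom_apply]
    rw [← Finsupp.mapDomain_comp]
    congr 1
    funext i
    simp only [Function.comp_apply, hπ]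
    congr 1
    push_cast
    ring
  have per : g D = g 0 := by
    have he : unfoldExp n d D = unfoldExp n d 0 := by
      unfold unfoldExp
      congr 1
      funext i
      have h0 : ((D : ℕ) : ZMod (d i)) = 0 :=
        (ZMod.natCast_eq_zero_iff D (d i)).2 (Finset.dvd_lcm (Finset.mem_univ i))
      simp [h0]
    rw [hg]
    simp only [he]
  rw [Finsupp.mapDomain_finset_sum]
  show ∑ l ∈ Finset.range D, Finsupp.mapDomain (fun v => Finsupp.mapDomain π v) (g l) = ∑ l ∈ Finset.range D, g l
  simp only [key]
  have h : (∑ l ∈ Finset.range D, g (l + 1)) + g 0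
      = (∑ l ∈ Finset.range D, g l) + g 0 := by
    rw [← Finset.sum_range_succ', Finset.sum_range_succ, per]
  exact add_right_cancel h
end

section
/- Let k ≥ 1, let v_1, …, v_k be elements of Δ, let i_1, …, i_k be natural numbers, let θ : ℕ → K satisfy ‖θ_i‖ ≤ ρ^i for all i, and let c_1, …, c_k ∈ K satisfy ‖c_m‖ ≤ 1. Then ‖∏_{m=1}^k θ_{i_m} · c_m^{i_m}‖ ≤ ρ^{w(Σ_{m=1}^k i_m • v_m)}. -/
/-- **Core estimate for the coefficients of Dwork's splitting series.**
Let `Δ ⊆ ι → ℝ` be convex with `0 ∈ Δ` and `w = gauge Δ` the associated weight.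
If `‖θ_i‖ ≤ ρ^i`, `‖c_m‖ ≤ 1` and `v_1, …, v_k ∈ Δ`, then
`‖∏_{m=1}^k θ_{i_m} c_m^{i_m}‖ ≤ ρ^{w(Σ_m i_m • v_m)}` for a field `K` with a
multiplicative nonarchimedean norm and `0 < ρ ≤ 1`. -/
theorem norm_prod_theta_le_rpow_gauge
    {ι : Type*} [Fintype ι] (Δ : Set (ι → ℝ)) (hconv : Convex ℝ Δ)
    (h0 : (0 : ι → ℝ) ∈ Δ)
    {K : Type*} [NormedField K] (hna : IsNonarchimedean (fun x : K => ‖x‖))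
    (ρ : ℝ) (hρ0 : 0 < ρ) (hρ1 : ρ ≤ 1)
    (k : ℕ) (hk : 1 ≤ k) (v : Fin k → ι → ℝ) (hv : ∀ m, v m ∈ Δ)
    (idx : Fin k → ℕ) (θ : ℕ → K) (hθ : ∀ i, ‖θ i‖ ≤ ρ ^ i)
    (c : Fin k → K) (hc : ∀ m, ‖c m‖ ≤ 1) :
    ‖∏ m, θ (idx m) * c m ^ idx m‖ ≤ ρ ^ gauge Δ (∑ m, (idx m : ℝ) • v m) := by
  classical
  set N : ℕ := ∑ m, idx m with hN
  have hnorm : ‖∏ m, θ (idx m) * c m ^ idx m‖ ≤ ρ ^ ((N : ℕ) : ℝ) := by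
    rw [Real.rpow_natCast]
    calc ‖∏ m, θ (idx m) * c m ^ idx m‖ = ∏ m, ‖θ (idx m) * c m ^ idx m‖ :=
          norm_prod _ _
      _ ≤ ∏ m, ρ ^ idx m := by
          refine Finset.prod_le_prod (fun m _ => norm_nonneg _) (fun m _ => ?_)
          rw [norm_mul, norm_pow]
          calc ‖θ (idx m)‖ * ‖c m‖ ^ idx m ≤ ρ ^ idx m * 1 ^ idx m :=
                mul_le_mul (hθ _) (pow_le_pow_left₀ (norm_nonneg _) (hc m) _)
                  (by positivity) (by positivity)
            _ = ρ ^ idx m := by ring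
      _ = ρ ^ N := by rw [hN, Finset.prod_pow_eq_pow_sum]
  have hg : gauge Δ (∑ m, (idx m : ℝ) • v m) ≤ (N : ℝ) := by
    rcases Nat.eq_zero_or_pos N with h0N | hpos
    · have hz : ∀ m ∈ Finset.univ, idx m = 0 :=
        (Finset.sum_eq_zero_iff).mp (hN ▸ h0N)
      have : (∑ m, (idx m : ℝ) • v m) = 0 := by
        apply Finset.sum_eq_zero
        intro m hm
        simp [hz m hm]
      rw [this, gauge_zero, h0N]
      simp
    · have hNpos : (0:ℝ) < N := by exact_mod_cast hpos
      apply gauge_le_of_mem hNpos.le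
      refine ⟨∑ m, ((idx m : ℝ)/N) • v m, ?_, ?_⟩
      · refine hconv.sum_mem (fun m _ => by positivity) ?_ (fun m _ => hv m)
        have hs : (∑ m, (idx m : ℝ)) = (N : ℝ) := by rw [hN]; push_cast; ring
        rw [← Finset.sum_div, hs, div_self hNpos.ne']
      · show (N : ℝ) • (∑ m, ((idx m : ℝ)/N) • v m) = ∑ m, (idx m : ℝ) • v m
        rw [Finset.smul_sum]
        refine Finset.sum_congr rfl (fun m _ => ?_)
        rw [smul_smul]
        congr 1
        field_simp
  calc ‖∏ m, θ (idx m) * c m ^ idx m‖ ≤ ρ ^ ((N : ℕ) : ℝ) := hnorm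
    _ ≤ ρ ^ gauge Δ (∑ m, (idx m : ℝ) • v m) :=
        Real.rpow_le_rpow_of_exponent_ge hρ0 hρ1 hg
end

section
/- Let k ≥ 1 and let b be an integer coprime to d. The map ρ sending y ∈ W_k^{(b)} to (y(1,0), …, y(n,0)) is a bijection from W_k^{(b)} onto the product over i = 1, …, n of the groups { x ∈ Kˣ : x^{q^{k d_i} − 1} = 1 } (the unit groups of the subfields of K with q^{k d_i} elements). -/
/-- The twisted fixed point set `W_k^{(b)} = { y : Y → Kˣ | y(i,j)^{q^k} = y(i, j+b) }`,
where `K` is an algebraic closure of `𝔽_p` and `q = p^a`. -/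
def twistedFixedPoints (p a : ℕ) [Fact p.Prime] (n : ℕ) (d : Fin n → ℕ) (k : ℕ) (b : ℤ) :
    Set ((Σ i : Fin n, ZMod (d i)) → (AlgebraicClosure (ZMod p))ˣ) :=
  {y | ∀ (i : Fin n) (j : ZMod (d i)),
    y ⟨i, j⟩ ^ (p ^ a) ^ k = y ⟨i, j + (b : ZMod (d i))⟩}

private lemma aux_pow_pow_add {G : Type*} [CommGroup G] (x : G) (Q D : ℕ)
    (hx : x ^ Q ^ D = x) : ∀ (c m : ℕ), x ^ Q ^ (m + D * c) = x ^ Q ^ m := by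
  intro c
  induction c with
  | zero => simp
  | succ c ih =>
    intro m
    have h1 : m + D * (c + 1) = (m + D) + D * c := by ring
    rw [h1, ih]
    have h2 : Q ^ (m + D) = Q ^ D * Q ^ m := by rw [pow_add]; ring
    rw [h2, pow_mul, hx]

private lemma aux_pow_pow_modEq {G : Type*} [CommGroup G] (x : G) (Q D : ℕ)
    (hx : x ^ Q ^ D = x) {s t : ℕ} (h : s ≡ t [MOD D]) :
    x ^ Q ^ s = x ^ Q ^ t := by
  have hm : ∀ m, x ^ Q ^ m = x ^ Q ^ (m % D) := by
    intro m
    conv_lhs => rw [← Nat.mod_add_div m D]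
    exact aux_pow_pow_add x Q D hx _ _
  rw [hm s, hm t, show s % D = t % D from h]

/-- **The projection onto the zero-th coordinates is a bijection** from `W_k^{(b)}` onto
the product over `i = 1, …, n` of the unit groups of the subfields of `K` with
`q^{k dᵢ}` elements, i.e. onto `{ x : Fin n → Kˣ | ∀ i, x i ^ (q^{k dᵢ} − 1) = 1 }`,
provided `gcd(b, d) = 1` where `d = lcm(d₁, …, dₙ)`. -/
theorem twistedFixedPoints_proj_bijOn (p a : ℕ) [Fact p.Prime] (ha : 1 ≤ a)
    (n : ℕ) (hn : 1 ≤ n) (d : Fin n → ℕ) (hd : ∀ i, 0 < d i)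
    (k : ℕ) (hk : 1 ≤ k) (b : ℤ) (hb : IsCoprime b ((Finset.univ.lcm d : ℕ) : ℤ)) :
    Set.BijOn
      (fun (y : (Σ i : Fin n, ZMod (d i)) → (AlgebraicClosure (ZMod p))ˣ)
          (i : Fin n) => y ⟨i, 0⟩)
      (twistedFixedPoints p a n d k b)
      {x : Fin n → (AlgebraicClosure (ZMod p))ˣ |
        ∀ i, x i ^ ((p ^ a) ^ (k * d i) - 1) = 1} := by
  haveI : ∀ i, NeZero (d i) := fun i => ⟨(hd i).ne'⟩
  have hp : 0 < p := (Fact.out : p.Prime).pos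
  have hQpos : ∀ i, 1 ≤ ((p ^ a) ^ k) ^ (d i) := fun i => Nat.one_le_pow _ _ (by positivity)
  have hpm : ∀ i : Fin n, (p ^ a) ^ (k * d i) = ((p ^ a) ^ k) ^ (d i) :=
    fun i => pow_mul (p ^ a) k (d i)
  -- b is a unit mod each d i
  have hbu : ∀ i : Fin n, ∃ c : ZMod (d i), (b : ZMod (d i)) * c = 1 := by
    intro i
    have hdvd : (d i : ℤ) ∣ ((Finset.univ.lcm d : ℕ) : ℤ) :=
      Int.natCast_dvd_natCast.mpr (Finset.dvd_lcm (Finset.mem_univ i))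
    obtain ⟨u, v, huv⟩ := hb.of_isCoprime_of_dvd_right hdvd
    refine ⟨(u : ZMod (d i)), ?_⟩
    have h2 := congrArg (fun z : ℤ => (z : ZMod (d i))) huv
    push_cast at h2
    rw [ZMod.natCast_self] at h2
    rw [mul_comm]
    simpa using h2
  choose c hc using hbu
  -- iteration of the defining relation
  have iter : ∀ y ∈ twistedFixedPoints p a n d k b, ∀ (i : Fin n) (m : ℕ) (j : ZMod (d i)),
      y ⟨i, j⟩ ^ ((p ^ a) ^ k) ^ m = y ⟨i, j + (m : ZMod (d i)) * (b : ZMod (d i))⟩ := by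
    intro y hy i m
    induction m with
    | zero => intro j; simp
    | succ m ih =>
      intro j
      have key : y ⟨i, j⟩ ^ ((p ^ a) ^ k) ^ (m + 1)
          = (y ⟨i, j⟩ ^ ((p ^ a) ^ k) ^ m) ^ (p ^ a) ^ k := by
        rw [pow_succ, pow_mul]
      rw [key, ih j, hy i (j + (m : ZMod (d i)) * (b : ZMod (d i)))]
      congr 2
      push_cast
      ring
  -- values at 0 are fixed by the Q^{d i}-power map
  have hfix : ∀ y ∈ twistedFixedPoints p a n d k b, ∀ i : Fin n,
      y ⟨i, 0⟩ ^ ((p ^ a) ^ k) ^ (d i) = y ⟨i, 0⟩ := by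
    intro y hy i
    have h := iter y hy i (d i) 0
    simpa [ZMod.natCast_self] using h
  refine ⟨?_, ?_, ?_⟩
  · -- MapsTo
    intro y hy i
    have h := hfix y hy i
    rw [hpm i]
    have h1 : y ⟨i, 0⟩ ^ (((p ^ a) ^ k) ^ (d i) - 1) * y ⟨i, 0⟩ = y ⟨i, 0⟩ := by
      rw [← pow_succ, Nat.sub_add_cancel (hQpos i), h]
    calc y ⟨i, 0⟩ ^ (((p ^ a) ^ k) ^ (d i) - 1)
        = y ⟨i, 0⟩ ^ (((p ^ a) ^ k) ^ (d i) - 1) * y ⟨i, 0⟩ * (y ⟨i, 0⟩)⁻¹ := by group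
      _ = 1 := by rw [h1, mul_inv_cancel]
  · -- InjOn
    intro y₁ hy₁ y₂ hy₂ hproj
    funext s
    obtain ⟨i, j⟩ := s
    have hmj : (0 : ZMod (d i)) + (((j * c i).val : ℕ) : ZMod (d i)) * (b : ZMod (d i)) = j := by
      rw [ZMod.natCast_val, ZMod.cast_id, zero_add, mul_assoc, mul_comm (c i), hc i, mul_one]
    have h1 := iter y₁ hy₁ i (j * c i).val 0
    have h2 := iter y₂ hy₂ i (j * c i).val 0
    rw [hmj] at h1 h2
    have h0 : y₁ ⟨i, 0⟩ = y₂ ⟨i, 0⟩ := congrFun hproj i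
    rw [← h1, ← h2, h0]
  · -- SurjOn
    intro x hx
    have hxfix : ∀ i : Fin n, x i ^ ((p ^ a) ^ k) ^ (d i) = x i := by
      intro i
      have h := hx i
      rw [hpm i] at h
      conv_lhs => rw [← Nat.sub_add_cancel (hQpos i)]
      rw [pow_succ, h, one_mul]
    refine ⟨fun s => x s.1 ^ ((p ^ a) ^ k) ^ ((s.2 * c s.1).val), ?_, ?_⟩
    · -- membership in twistedFixedPoints
      intro i j
      show (x i ^ ((p ^ a) ^ k) ^ ((j * c i).val)) ^ (p ^ a) ^ k
          = x i ^ ((p ^ a) ^ k) ^ (((j + (b : ZMod (d i))) * c i).val)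
      rw [← pow_mul, ← pow_succ]
      refine aux_pow_pow_modEq (x i) ((p ^ a) ^ k) (d i) (hxfix i) ?_
      rw [← ZMod.natCast_eq_natCast_iff]
      push_cast
      rw [ZMod.natCast_val, ZMod.natCast_val, ZMod.cast_id, ZMod.cast_id, add_mul, hc i]
    · -- projection equals x
      funext i
      show x i ^ ((p ^ a) ^ k) ^ (((0 : ZMod (d i)) * c i).val) = x i
      rw [zero_mul, ZMod.val_zero, pow_zero, pow_one]
end

section
/- Let k ≥ 1 and let b be an integer coprime to d. For every y ∈ W_k^{(b)}, Σ_{l=0}^{d−1} f(y_{(l)}) = Σ_{m=0}^{d−1} f(ρ(y))^{q^{km}}, where y_{(l)} : Fin n → Kˣ is given by y_{(l)}(i) = y(i, l mod d_i) and ρ(y) : Fin n → Kˣ is given by ρ(y)(i) = y(i, 0). (That is, the value of the unfolded polynomial G at a fixed point y equals the relative trace Tr_{𝔽_{q^{kd}}/𝔽_{q^k}}(f(ρ(y))).) -/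
/-- The value `f(x) = Σ_{u ∈ S} c_u ∏ᵢ xᵢ^{uᵢ}` of a Laurent polynomial with support `S`
and coefficients `c`, at a point `x` of the torus `(Kˣ)ⁿ` (integer powers taken in `Kˣ`). -/
noncomputable def laurentVal (p : ℕ) [Fact p.Prime] (n : ℕ) (S : Finset (Fin n → ℤ))
    (c : (Fin n → ℤ) → AlgebraicClosure (ZMod p))
    (x : Fin n → (AlgebraicClosure (ZMod p))ˣ) : AlgebraicClosure (ZMod p) :=
  ∑ u ∈ S, c u * ((∏ i, x i ^ u i : (AlgebraicClosure (ZMod p))ˣ) : AlgebraicClosure (ZMod p))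

private lemma coeff_pow_iter {K : Type*} [CommRing K] (p : ℕ) (c : K) (a : ℕ)
    (hc : c ^ p ^ a = c) (t : ℕ) : c ^ p ^ (a * t) = c := by
  induction t with
  | zero => simp
  | succ t ih => rw [mul_add, mul_one, pow_add, pow_mul, ih, hc]

private lemma laurentVal_pow (p : ℕ) [Fact p.Prime] (n : ℕ) (S : Finset (Fin n → ℤ))
    (c : (Fin n → ℤ) → AlgebraicClosure (ZMod p))
    (N : ℕ) (hc : ∀ u ∈ S, c u ^ p ^ N = c u)
    (x : Fin n → (AlgebraicClosure (ZMod p))ˣ) :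
    laurentVal p n S c x ^ p ^ N = laurentVal p n S c (fun i => x i ^ p ^ N) := by
  classical
  have key : ∀ (z : (AlgebraicClosure (ZMod p))ˣ) (u : ℤ) (P : ℕ),
      (z ^ u) ^ P = (z ^ P) ^ u := by
    intro z u P
    rw [← zpow_natCast (z ^ u), ← zpow_mul, mul_comm, zpow_mul, zpow_natCast]
  unfold laurentVal
  rw [← iterateFrobenius_def (R := AlgebraicClosure (ZMod p)) (p := p), map_sum]
  refine Finset.sum_congr rfl fun u hu => ?_
  rw [map_mul, iterateFrobenius_def, iterateFrobenius_def, hc u hu]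
  congr 1
  rw [← Units.val_pow_eq_pow_val]
  congr 1
  rw [← Finset.prod_pow]
  exact Finset.prod_congr rfl fun i _ => key (x i) (u i) (p ^ N)

/-- **The unfolded polynomial evaluated at a twisted fixed point is a relative trace:**
for `y ∈ W_k^{(b)}` with `gcd(b, d) = 1`,
`Σ_{l=0}^{d−1} f(y_{(l)}) = Σ_{m=0}^{d−1} f(ρ(y))^{q^{km}}`, where `y_{(l)}(i) = y(i, l mod dᵢ)`
and `ρ(y)(i) = y(i, 0)`. -/
theorem unfolded_eval_eq_relative_trace (p a : ℕ) [Fact p.Prime] (ha : 1 ≤ a)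
    (n : ℕ) (hn : 1 ≤ n) (d : Fin n → ℕ) (hd : ∀ i, 0 < d i)
    (k : ℕ) (hk : 1 ≤ k) (b : ℤ) (hb : IsCoprime b ((Finset.univ.lcm d : ℕ) : ℤ))
    (S : Finset (Fin n → ℤ)) (c : (Fin n → ℤ) → AlgebraicClosure (ZMod p))
    (hc : ∀ u ∈ S, c u ^ (p ^ a) = c u)
    (y : (Σ i : Fin n, ZMod (d i)) → (AlgebraicClosure (ZMod p))ˣ)
    (hy : y ∈ twistedFixedPoints p a n d k b) :
    ∑ l ∈ Finset.range (Finset.univ.lcm d),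
        laurentVal p n S c (fun i => y ⟨i, (l : ZMod (d i))⟩) =
      ∑ m ∈ Finset.range (Finset.univ.lcm d),
        (laurentVal p n S c (fun i => y ⟨i, 0⟩)) ^ (p ^ a) ^ (k * m) := by
  classical
  -- iteration of the twisting relation
  have hiter : ∀ (m : ℕ) (i : Fin n) (j : ZMod (d i)),
      y ⟨i, j⟩ ^ (p ^ a) ^ (k * m) = y ⟨i, j + ((m * b : ℤ) : ZMod (d i))⟩ := by
    intro m
    induction m with
    | zero => intro i j; simp
    | succ m ih =>
      intro i j
      have h2 : (p ^ a) ^ (k * (m + 1)) = (p ^ a) ^ (k * m) * (p ^ a) ^ k := by ring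
      rw [h2, pow_mul, ih, hy i _]
      congr 1
      push_cast
      ring
  -- each term of the RHS
  have hterm : ∀ m : ℕ, (laurentVal p n S c fun i => y ⟨i, 0⟩) ^ (p ^ a) ^ (k * m)
      = laurentVal p n S c (fun i => y ⟨i, ((m * b : ℤ) : ZMod (d i))⟩) := by
    intro m
    have h1 : (p ^ a) ^ (k * m) = p ^ (a * (k * m)) := by rw [← pow_mul]
    rw [h1, laurentVal_pow p n S c _ (fun u hu => coeff_pow_iter p (c u) a (hc u hu) (k * m))]
    congr 1
    funext i
    rw [← h1, hiter m i 0, zero_add]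
  rcases eq_or_ne (Finset.univ.lcm d) 0 with hN | hN
  · simp [hN]
  haveI : NeZero (Finset.univ.lcm d) := ⟨hN⟩
  have hdvd : ∀ i, d i ∣ Finset.univ.lcm d := fun i => Finset.dvd_lcm (Finset.mem_univ i)
  set N := Finset.univ.lcm d with hNdef
  set G : ZMod N → AlgebraicClosure (ZMod p) :=
    fun z => laurentVal p n S c (fun i => y ⟨i, ZMod.castHom (hdvd i) (ZMod (d i)) z⟩) with hG
  have key : ∀ H : ZMod N → AlgebraicClosure (ZMod p),
      ∑ l ∈ Finset.range N, H ↑l = ∑ z : ZMod N, H z := by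
    intro H
    refine Finset.sum_nbij' (fun l => (l : ZMod N)) (fun z => z.val) ?_ ?_ ?_ ?_ ?_
    · intro l hl; exact Finset.mem_univ _
    · intro z hz; exact Finset.mem_range.mpr (ZMod.val_lt z)
    · intro l hl; exact ZMod.val_cast_of_lt (Finset.mem_range.mp hl)
    · intro z hz; exact ZMod.natCast_rightInverse z
    · intro l hl; rfl
  -- b is a unit mod N
  obtain ⟨u, v, huv⟩ := hb
  have h1 : (u : ZMod N) * (b : ZMod N) = 1 := by
    have := congrArg (Int.cast : ℤ → ZMod N) huv
    push_cast at this
    simpa [ZMod.natCast_self] using this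
  have hbu : IsUnit ((b : ℤ) : ZMod N) :=
    IsUnit.of_mul_eq_one _ (by rw [mul_comm]; exact h1)
  calc ∑ l ∈ Finset.range N, laurentVal p n S c (fun i => y ⟨i, (l : ZMod (d i))⟩)
      = ∑ l ∈ Finset.range N, G ↑l := by
        refine Finset.sum_congr rfl fun l _ => ?_
        rw [hG]
        congr 1
        funext i
        rw [map_natCast]
    _ = ∑ z : ZMod N, G z := key G
    _ = ∑ z : ZMod N, G (z * hbu.unit) := (Equiv.sum_comp (Units.mulRight hbu.unit) G).symm
    _ = ∑ m ∈ Finset.range N, G (↑m * hbu.unit) := (key (fun z => G (z * hbu.unit))).symm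
    _ = ∑ m ∈ Finset.range N, (laurentVal p n S c fun i => y ⟨i, 0⟩) ^ (p ^ a) ^ (k * m) := by
        refine Finset.sum_congr rfl fun m _ => ?_
        rw [hterm m]
        simp only [hG, IsUnit.unit_spec]
        congr 1
        funext i
        rw [map_mul, map_natCast, map_intCast]
        push_cast
        ring
end

section
/- Let k ≥ 1, let b be an integer coprime to d, and let u : Y → ℤ. Then Σ_{y ∈ W_k^{(b)}} ∏_{(i,j) ∈ Y} y(i,j)^{u(i,j)} (an element of K, the integer powers taken in Kˣ) equals the image in K of the natural number ∏_{i=1}^n (q^{k d_i} − 1) if there exists v : Y → ℤ such that u(i,j) = q^k · v(i, j + b) − v(i, j) for all (i, j) ∈ Y, and equals 0 otherwise. -/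
open Finset

private lemma zpow_finset_sum {G : Type*} [CommGroup G] (x : G) {ι : Type*} (s : Finset ι)
    (f : ι → ℤ) : x ^ (∑ i ∈ s, f i) = ∏ i ∈ s, x ^ f i := by
  classical
  induction s using Finset.induction with
  | empty => simp
  | insert _ _ h ih => rw [Finset.sum_insert h, Finset.prod_insert h, zpow_add, ih]

/-- index of `j` in the orbit of `0` under translation by the unit `β`. -/
private def midx {D : ℕ} (β j : ZMod D) : ℕ := (j * β⁻¹).val

private lemma midx_lt {D : ℕ} [NeZero D] (β j : ZMod D) : midx β j < D := ZMod.val_lt _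

private lemma midx_cast_mul {D : ℕ} [NeZero D] {β : ZMod D} (hβ : IsUnit β) (j : ZMod D) :
    ((midx β j : ℕ) : ZMod D) * β = j := by
  rw [midx, ZMod.natCast_val, ZMod.cast_id, mul_assoc, ZMod.inv_mul_of_unit β hβ, mul_one]

private lemma midx_natmul {D : ℕ} [NeZero D] {β : ZMod D} (hβ : IsUnit β) {m : ℕ} (hm : m < D) :
    midx β ((m : ZMod D) * β) = m := by
  rw [midx, mul_assoc, ZMod.mul_inv_of_unit β hβ, mul_one, ZMod.val_natCast,
    Nat.mod_eq_of_lt hm]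

private lemma midx_zero {D : ℕ} (β : ZMod D) : midx β (0 : ZMod D) = 0 := by
  simp [midx, ZMod.val_zero]

private lemma midx_add {D : ℕ} [NeZero D] {β : ZMod D} (hβ : IsUnit β) (j : ZMod D) :
    midx β (j + β) = (midx β j + 1) % D := by
  rw [midx, add_mul, ZMod.mul_inv_of_unit β hβ, ZMod.val_add, ZMod.val_one_eq_one_mod]
  conv_rhs => rw [Nat.add_mod]
  simp [Nat.mod_mod_of_dvd, Nat.mod_mod]
  rfl

private lemma midx_eq_zero {D : ℕ} [NeZero D] {β : ZMod D} (hβ : IsUnit β) {j : ZMod D}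
    (h : midx β j = 0) : j = 0 := by
  have := midx_cast_mul hβ j
  rw [h] at this
  simpa using this.symm

private lemma sum_primroot_zpow {K : Type*} [Field K] {N : ℕ} {ζ : Kˣ}
    (hζ : IsPrimitiveRoot ζ N) (e : ℤ) :
    ∑ m ∈ Finset.range N, (((ζ ^ m) ^ e : Kˣ) : K) = if (N : ℤ) ∣ e then (N : K) else 0 := by
  have hterm : ∀ m : ℕ, ((ζ ^ m) ^ e : Kˣ) = (ζ ^ e) ^ m := by
    intro m
    rw [← zpow_natCast ζ m, ← zpow_mul, mul_comm, zpow_mul, zpow_natCast]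
  have hord : (N : ℤ) ∣ e ↔ (ζ ^ e : Kˣ) = 1 := by
    rw [← orderOf_dvd_iff_zpow_eq_one, ← hζ.eq_orderOf]
  by_cases hdvd : (N : ℤ) ∣ e
  · rw [if_pos hdvd]
    have h1 : (ζ ^ e : Kˣ) = 1 := hord.mp hdvd
    simp [hterm, h1]
  · rw [if_neg hdvd]
    have hwne : ((ζ ^ e : Kˣ) : K) ≠ 1 := by
      intro h
      exact hdvd (hord.mpr (Units.ext (by rw [Units.val_one]; exact h)))
    have hwN : ((ζ ^ e : Kˣ) : K) ^ N = 1 := by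
      rw [← Units.val_pow_eq_pow_val, ← zpow_natCast, ← zpow_mul, mul_comm, zpow_mul,
        zpow_natCast, hζ.pow_eq_one, one_zpow, Units.val_one]
    calc ∑ m ∈ Finset.range N, (((ζ ^ m) ^ e : Kˣ) : K)
        = ∑ m ∈ Finset.range N, ((ζ ^ e : Kˣ) : K) ^ m := by
          refine Finset.sum_congr rfl fun m _ => ?_
          rw [hterm m, Units.val_pow_eq_pow_val]
      _ = (((ζ ^ e : Kˣ) : K) ^ N - 1) / (((ζ ^ e : Kˣ) : K) - 1) := geom_sum_eq hwne N
      _ = 0 := by rw [hwN, sub_self, zero_div]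

/-- **Orthogonality of characters on the twisted fixed point set.**
For `b` coprime to `d = lcm(d₁, …, dₙ)` and `u : Y → ℤ`, the character sum
`Σ_{y ∈ W_k^{(b)}} ∏_{(i,j)} y(i,j)^{u(i,j)}` (in `K`) equals `∏ᵢ (q^{k dᵢ} − 1)` if
`u(i,j) = q^k v(i, j+b) − v(i,j)` for some `v : Y → ℤ`, and equals `0` otherwise. -/
theorem twistedFixedPoints_char_sum (p a : ℕ) [Fact p.Prime] (ha : 1 ≤ a)
    (n : ℕ) (hn : 1 ≤ n) (d : Fin n → ℕ) [∀ i, NeZero (d i)]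
    (k : ℕ) (hk : 1 ≤ k) (b : ℤ) (hb : IsCoprime b ((Finset.univ.lcm d : ℕ) : ℤ))
    (u : (Σ i : Fin n, ZMod (d i)) → ℤ) :
    ((∃ v : (Σ i : Fin n, ZMod (d i)) → ℤ, ∀ (i : Fin n) (j : ZMod (d i)),
        u ⟨i, j⟩ = ((p : ℤ) ^ a) ^ k * v ⟨i, j + (b : ZMod (d i))⟩ - v ⟨i, j⟩) →
      (∑ᶠ y ∈ twistedFixedPoints p a n d k b,
          ((∏ y' : Σ i : Fin n, ZMod (d i), y y' ^ u y' :
            (AlgebraicClosure (ZMod p))ˣ) : AlgebraicClosure (ZMod p)))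
        = ((∏ i : Fin n, ((p ^ a) ^ (k * d i) - 1) : ℕ) : AlgebraicClosure (ZMod p))) ∧
    ((¬ ∃ v : (Σ i : Fin n, ZMod (d i)) → ℤ, ∀ (i : Fin n) (j : ZMod (d i)),
        u ⟨i, j⟩ = ((p : ℤ) ^ a) ^ k * v ⟨i, j + (b : ZMod (d i))⟩ - v ⟨i, j⟩) →
      (∑ᶠ y ∈ twistedFixedPoints p a n d k b,
          ((∏ y' : Σ i : Fin n, ZMod (d i), y y' ^ u y' :
            (AlgebraicClosure (ZMod p))ˣ) : AlgebraicClosure (ZMod p)))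
        = 0) := by
  classical
  have hp : p.Prime := Fact.out
  have hd1 : ∀ i, 0 < d i := fun i => Nat.pos_of_ne_zero (NeZero.ne (d i))
  set Qn : ℕ := (p ^ a) ^ k with hQndef
  have hQn2 : 2 ≤ Qn := by
    have hpa : 2 ≤ p ^ a := hp.two_le.trans (Nat.le_self_pow (by omega) p)
    exact hpa.trans (Nat.le_self_pow (by omega) _)
  have hQd2 : ∀ i, 2 ≤ Qn ^ d i := by
    intro i
    exact hQn2.trans (Nat.le_self_pow (by have := hd1 i; omega) Qn)
  set N : Fin n → ℕ := fun i => Qn ^ d i - 1 with hNdef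
  have hN1 : ∀ i, 0 < N i := fun i => by have := hQd2 i; simp only [hNdef]; omega
  have hNsucc : ∀ i, N i + 1 = Qn ^ d i := fun i => by have := hQd2 i; simp only [hNdef]; omega
  have hNZ : ∀ i, ((N i : ℤ)) = (Qn : ℤ) ^ d i - 1 := by
    intro i
    have h2 := hQd2 i
    simp only [hNdef]
    push_cast [Nat.cast_sub (by omega : 1 ≤ Qn ^ d i)]
    ring
  have hQZ : ((p : ℤ) ^ a) ^ k = (Qn : ℤ) := by rw [hQndef]; push_cast; ring
  -- `b` is a unit mod each `d i`
  have hbu : ∀ i, IsUnit ((b : ZMod (d i))) := by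
    intro i
    have hco : IsCoprime b ((d i : ℤ)) :=
      hb.of_isCoprime_of_dvd_right
        (Int.natCast_dvd_natCast.mpr (Finset.dvd_lcm (Finset.mem_univ i)))
    have hmap := hco.map (Int.castRingHom (ZMod (d i)))
    simp only [map_intCast, map_natCast, ZMod.natCast_self] at hmap
    exact isCoprime_zero_right.mp hmap
  -- the exponents `e i`
  set e : Fin n → ℤ := fun i => ∑ m ∈ Finset.range (d i),
      (Qn : ℤ) ^ m * u ⟨i, (m : ZMod (d i)) * (b : ZMod (d i))⟩ with hedef
  -- the key equivalence
  have hiff : (∃ v : (Σ i : Fin n, ZMod (d i)) → ℤ, ∀ (i : Fin n) (j : ZMod (d i)),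
      u ⟨i, j⟩ = ((p : ℤ) ^ a) ^ k * v ⟨i, j + (b : ZMod (d i))⟩ - v ⟨i, j⟩) ↔
      ∀ i, ((N i : ℤ)) ∣ e i := by
    constructor
    · rintro ⟨v, hv⟩ i
      have hsum : e i = ∑ m ∈ Finset.range (d i),
          ((Qn : ℤ) ^ (m+1) * v ⟨i, ((m+1 : ℕ) : ZMod (d i)) * (b : ZMod (d i))⟩
            - (Qn : ℤ) ^ m * v ⟨i, (m : ZMod (d i)) * (b : ZMod (d i))⟩) := by
        refine Finset.sum_congr rfl fun m _ => ?_
        rw [hv i _, hQZ]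
        have harg : ((m : ZMod (d i)) * (b : ZMod (d i)) + (b : ZMod (d i)))
            = ((m+1 : ℕ) : ZMod (d i)) * (b : ZMod (d i)) := by push_cast; ring
        rw [harg]; ring
      have hEe : e i = ((Qn : ℤ) ^ d i - 1) * v ⟨i, 0⟩ := by
        rw [hsum, Finset.sum_range_sub
          (fun m => (Qn : ℤ) ^ m * v ⟨i, (m : ZMod (d i)) * (b : ZMod (d i))⟩)]
        simp only [ZMod.natCast_self, zero_mul, pow_zero, one_mul, Nat.cast_zero]
        ring
      rw [hNZ i, hEe]
      exact Dvd.intro _ rfl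
    · intro h
      choose c hc using h
      refine ⟨fun y => (Qn : ℤ) ^ (d y.1 - midx (b : ZMod (d y.1)) y.2) * c y.1 -
        ∑ t ∈ Finset.range (d y.1 - midx (b : ZMod (d y.1)) y.2),
          (Qn : ℤ) ^ t * u ⟨y.1, y.2 + (t : ZMod (d y.1)) * (b : ZMod (d y.1))⟩,
        fun i j => ?_⟩
      have hmlt : midx (b : ZMod (d i)) j < d i := midx_lt _ _
      rw [hQZ]
      show u ⟨i, j⟩ = (Qn : ℤ) *
          ((Qn : ℤ) ^ (d i - midx (b : ZMod (d i)) (j + (b : ZMod (d i)))) * c i -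
            ∑ t ∈ Finset.range (d i - midx (b : ZMod (d i)) (j + (b : ZMod (d i)))),
              (Qn : ℤ) ^ t * u ⟨i, (j + (b : ZMod (d i))) + (t : ZMod (d i)) * (b : ZMod (d i))⟩) -
          ((Qn : ℤ) ^ (d i - midx (b : ZMod (d i)) j) * c i -
            ∑ t ∈ Finset.range (d i - midx (b : ZMod (d i)) j),
              (Qn : ℤ) ^ t * u ⟨i, j + (t : ZMod (d i)) * (b : ZMod (d i))⟩)
      by_cases hcase : midx (b : ZMod (d i)) j + 1 < d i
      · have hmj' : midx (b : ZMod (d i)) (j + (b : ZMod (d i)))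
            = midx (b : ZMod (d i)) j + 1 := by
          rw [midx_add (hbu i) j, Nat.mod_eq_of_lt hcase]
        rw [hmj']
        have hdm : d i - midx (b : ZMod (d i)) j = (d i - (midx (b : ZMod (d i)) j + 1)) + 1 := by
          omega
        rw [hdm, Finset.sum_range_succ']
        simp only [Nat.cast_zero, zero_mul, add_zero, pow_zero, one_mul]
        have hS : ∀ t : ℕ, (Qn : ℤ) ^ (t+1) * u ⟨i, j + ((t+1 : ℕ) : ZMod (d i)) * (b : ZMod (d i))⟩
            = (Qn : ℤ) * ((Qn : ℤ) ^ t *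
              u ⟨i, (j + (b : ZMod (d i))) + (t : ZMod (d i)) * (b : ZMod (d i))⟩) := by
          intro t
          have harg : j + ((t+1 : ℕ) : ZMod (d i)) * (b : ZMod (d i))
              = (j + (b : ZMod (d i))) + (t : ZMod (d i)) * (b : ZMod (d i)) := by
            push_cast; ring
          rw [harg]; ring
        rw [Finset.sum_congr rfl fun t _ => hS t, ← Finset.mul_sum]
        ring
      · have h1 : midx (b : ZMod (d i)) j + 1 = d i := by omega
        have hj0 : j + (b : ZMod (d i)) = 0 := by
          apply midx_eq_zero (hbu i)
          rw [midx_add (hbu i) j, h1, Nat.mod_self]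
        rw [hj0, midx_zero, Nat.sub_zero]
        have h0 : ∑ t ∈ Finset.range (d i),
            (Qn : ℤ) ^ t * u ⟨i, (0 : ZMod (d i)) + (t : ZMod (d i)) * (b : ZMod (d i))⟩ = e i := by
          rw [hedef]
          exact Finset.sum_congr rfl fun t _ => by rw [zero_add]
        rw [h0, hc i, hNZ i]
        have hdm1 : d i - midx (b : ZMod (d i)) j = 1 := by omega
        rw [hdm1, Finset.sum_range_one]
        simp only [Nat.cast_zero, zero_mul, add_zero, pow_zero, one_mul, pow_one]
        ring
  -- primitive roots of unity
  have hNK : ∀ i, ((N i : ℕ) : AlgebraicClosure (ZMod p)) ≠ 0 := by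
    intro i
    have hcast : ((N i : ℕ) : AlgebraicClosure (ZMod p)) = -1 := by
      have h1 : (1:ℕ) ≤ Qn ^ d i := by have := hQd2 i; omega
      simp only [hNdef]
      rw [Nat.cast_sub h1]
      have hpK : ((p : ℕ) : AlgebraicClosure (ZMod p)) = 0 := CharP.cast_eq_zero _ p
      rw [hQndef]
      push_cast
      rw [hpK, zero_pow (by omega : a ≠ 0), zero_pow (by omega : k ≠ 0),
        zero_pow (by have := hd1 i; omega : d i ≠ 0)]
      ring
    rw [hcast]
    simp
  have hzeta : ∀ i, ∃ ζ : (AlgebraicClosure (ZMod p))ˣ, IsPrimitiveRoot ζ (N i) := by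
    intro i
    have : NeZero ((N i : AlgebraicClosure (ZMod p))) := ⟨hNK i⟩
    obtain ⟨z, hz⟩ := HasEnoughRootsOfUnity.exists_primitiveRoot (AlgebraicClosure (ZMod p)) (N i)
    exact ⟨(hz.isUnit (hN1 i).ne').unit, hz.isUnit_unit (hN1 i).ne'⟩
  choose ζ hζ using hzeta
  -- the parametrization
  set Φ : (∀ i : Fin n, (AlgebraicClosure (ZMod p))ˣ) →
      ((Σ i : Fin n, ZMod (d i)) → (AlgebraicClosure (ZMod p))ˣ) :=
    fun x y' => x y'.1 ^ Qn ^ (midx (b : ZMod (d y'.1)) y'.2) with hΦdef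
  have hΦinj : Function.Injective Φ := by
    intro x x' hxx'
    funext i
    have h0 := congrFun hxx' ⟨i, (0 : ZMod (d i))⟩
    simpa [hΦdef, midx_zero] using h0
  set R : Fin n → Finset (AlgebraicClosure (ZMod p))ˣ :=
    fun i => (Finset.range (N i)).image (ζ i ^ ·) with hRdef
  have hmemR : ∀ i x, x ∈ R i ↔ x ^ N i = 1 := by
    intro i x
    constructor
    · intro hx
      obtain ⟨m, -, rfl⟩ := Finset.mem_image.mp hx
      rw [← pow_mul, mul_comm, pow_mul, (hζ i).pow_eq_one, one_pow]
    · intro hx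
      have : NeZero (N i) := ⟨by have := hN1 i; omega⟩
      have hxK : ((x : AlgebraicClosure (ZMod p))) ^ N i = 1 := by
        rw [← Units.val_pow_eq_pow_val, hx, Units.val_one]
      obtain ⟨m, hmlt, hm⟩ :=
        (IsPrimitiveRoot.coe_units_iff.mpr (hζ i)).eq_pow_of_pow_eq_one hxK
      refine Finset.mem_image.mpr ⟨m, Finset.mem_range.mpr hmlt, ?_⟩
      exact Units.ext (by rw [← hm, Units.val_pow_eq_pow_val])
  -- the fixed point set is the image of `Φ`
  have hWT : twistedFixedPoints p a n d k b = ↑((Fintype.piFinset R).image Φ) := by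
    ext y
    rw [Finset.coe_image, Set.mem_image]
    constructor
    · intro hy
      have hy' : ∀ (i : Fin n) (j : ZMod (d i)),
          y ⟨i, j⟩ ^ Qn = y ⟨i, j + (b : ZMod (d i))⟩ := hy
      have key : ∀ (i : Fin n) (m : ℕ),
          y ⟨i, (m : ZMod (d i)) * (b : ZMod (d i))⟩ = y ⟨i, 0⟩ ^ Qn ^ m := by
        intro i m
        induction m with
        | zero => simp
        | succ m ih =>
          have harg : (((m+1 : ℕ)) : ZMod (d i)) * (b : ZMod (d i))
              = (m : ZMod (d i)) * (b : ZMod (d i)) + (b : ZMod (d i)) := by push_cast; ring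
          rw [harg, ← hy' i _, ih, ← pow_mul, ← pow_succ]
      have hx1 : ∀ i, y ⟨i, 0⟩ ^ N i = 1 := by
        intro i
        have h0 := key i (d i)
        rw [ZMod.natCast_self, zero_mul] at h0
        have h1 : y ⟨i, 0⟩ ^ (N i) * y ⟨i, 0⟩ = 1 * y ⟨i, 0⟩ := by
          rw [one_mul, ← pow_succ, hNsucc i, ← h0]
        exact mul_right_cancel h1
      refine ⟨fun i => y ⟨i, 0⟩,
        Finset.mem_coe.mpr (Fintype.mem_piFinset.mpr fun i => (hmemR i _).mpr (hx1 i)), ?_⟩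
      funext y'
      obtain ⟨i, j⟩ := y'
      show y ⟨i, 0⟩ ^ Qn ^ (midx (b : ZMod (d i)) j) = y ⟨i, j⟩
      rw [← key i _, midx_cast_mul (hbu i) j]
    · rintro ⟨x, hx, rfl⟩
      intro i j
      have hxi := (hmemR i (x i)).mp (Fintype.mem_piFinset.mp (Finset.mem_coe.mp hx) i)
      show (x i ^ Qn ^ (midx (b : ZMod (d i)) j)) ^ Qn
          = x i ^ Qn ^ (midx (b : ZMod (d i)) (j + (b : ZMod (d i))))
      rw [midx_add (hbu i) j, ← pow_mul, ← pow_succ]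
      by_cases hcase : midx (b : ZMod (d i)) j + 1 < d i
      · rw [Nat.mod_eq_of_lt hcase]
      · have h1 : midx (b : ZMod (d i)) j + 1 = d i := by
          have := midx_lt (b : ZMod (d i)) j; omega
        rw [h1, Nat.mod_self, pow_zero, pow_one, ← hNsucc i, pow_succ, hxi, one_mul]
  -- the character sum
  have hsum : (∑ᶠ y ∈ twistedFixedPoints p a n d k b,
      ((∏ y' : Σ i : Fin n, ZMod (d i), y y' ^ u y' :
        (AlgebraicClosure (ZMod p))ˣ) : AlgebraicClosure (ZMod p)))
      = ∏ i : Fin n, (if ((N i : ℤ)) ∣ e i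
          then ((N i : ℕ) : AlgebraicClosure (ZMod p)) else 0) := by
    rw [hWT, finsum_mem_coe_finset, Finset.sum_image (fun x _ x' _ h => hΦinj h)]
    have hpt : ∀ x : ∀ i : Fin n, (AlgebraicClosure (ZMod p))ˣ,
        ((∏ y' : Σ i : Fin n, ZMod (d i), (Φ x) y' ^ u y' :
          (AlgebraicClosure (ZMod p))ˣ) : AlgebraicClosure (ZMod p))
        = ∏ i : Fin n, ((x i ^ e i : (AlgebraicClosure (ZMod p))ˣ) :
            AlgebraicClosure (ZMod p)) := by
      intro x
      have hU : (∏ y' : Σ i : Fin n, ZMod (d i), (Φ x) y' ^ u y' :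
          (AlgebraicClosure (ZMod p))ˣ) = ∏ i : Fin n, x i ^ e i := by
        rw [← Finset.univ_sigma_univ, Finset.prod_sigma]
        refine Finset.prod_congr rfl fun i _ => ?_
        have hterm : ∀ j : ZMod (d i), (Φ x) ⟨i, j⟩ ^ u ⟨i, j⟩
            = x i ^ ((Qn : ℤ) ^ (midx (b : ZMod (d i)) j) * u ⟨i, j⟩) := by
          intro j
          show (x i ^ Qn ^ (midx (b : ZMod (d i)) j)) ^ u ⟨i, j⟩ = _
          rw [← zpow_natCast (x i) (Qn ^ (midx (b : ZMod (d i)) j)), ← zpow_mul]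
          congr 1
        rw [Finset.prod_congr rfl fun j _ => hterm j, ← zpow_finset_sum]
        congr 1
        rw [hedef]
        refine Finset.sum_nbij' (fun j => midx (b : ZMod (d i)) j)
          (fun m => (m : ZMod (d i)) * (b : ZMod (d i)))
          (fun j _ => Finset.mem_range.mpr (midx_lt _ _)) (fun m _ => Finset.mem_univ _)
          (fun j _ => midx_cast_mul (hbu i) j)
          (fun m hm => midx_natmul (hbu i) (Finset.mem_range.mp hm)) (fun j _ => ?_)
        rw [midx_cast_mul (hbu i) j]
      rw [hU, Units.coe_prod]
    rw [Finset.sum_congr rfl fun x _ => hpt x]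
    rw [(Finset.prod_univ_sum R fun i xi =>
      ((xi ^ e i : (AlgebraicClosure (ZMod p))ˣ) : AlgebraicClosure (ZMod p))).symm]
    refine Finset.prod_congr rfl fun i _ => ?_
    rw [hRdef]
    have hinj : ∀ x ∈ Finset.range (N i), ∀ y ∈ Finset.range (N i),
        ζ i ^ x = ζ i ^ y → x = y := by
      intro x hx y hy hxy
      exact pow_injOn_Iio_orderOf
        (by rw [← (hζ i).eq_orderOf]; exact Finset.mem_range.mp hx)
        (by rw [← (hζ i).eq_orderOf]; exact Finset.mem_range.mp hy) hxy
    rw [Finset.sum_image hinj]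
    exact sum_primroot_zpow (hζ i) (e i)
  constructor
  · intro hv
    have hd := hiff.mp hv
    rw [hsum, Finset.prod_congr rfl fun i _ => if_pos (hd i), Nat.cast_prod]
    refine Finset.prod_congr rfl fun i _ => ?_
    simp only [hNdef, hQndef, ← pow_mul]
    rw [mul_assoc]
  · intro hv
    have hnd : ¬ ∀ i, ((N i : ℤ)) ∣ e i := fun h => hv (hiff.mpr h)
    push_neg at hnd
    obtain ⟨i0, hi0⟩ := hnd
    rw [hsum]
    exact Finset.prod_eq_zero (Finset.mem_univ i0) (if_neg hi0)
end

section
/- Let k ≥ 1, let b be an integer coprime to d, and let u : Y → ℤ. Then ∏_{(i,j) ∈ Y} y(i,j)^{u(i,j)} = 1 in Kˣ for every y ∈ W_k^{(b)} if and only if there exists v : Y → ℤ such that u(i,j) = q^k · v(i, j + b) − v(i, j) for all (i, j) ∈ Y. (In matrix form: the character y ↦ y^u is trivial on W_k^{(b)} exactly when u lies in the lattice (q^k P^{−b} − I)ℤ^N.) -/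
lemma my_zpow_sum {G : Type*} [CommGroup G] (g : G) {α : Type*} (s : Finset α) (f : α → ℤ) :
    g ^ (∑ x ∈ s, f x) = ∏ x ∈ s, g ^ f x := by
  classical
  induction s using Finset.induction_on with
  | empty => simp
  | insert _ _ hx ih => rw [Finset.sum_insert hx, Finset.prod_insert hx, zpow_add, ih]

lemma my_pow_pow_congr {M : Type*} [Monoid M] (ζ : M) (Q D : ℕ) (hc : ζ ^ Q ^ D = ζ)
    {s t : ℕ} (hst : s ≡ t [MOD D]) : ζ ^ Q ^ s = ζ ^ Q ^ t := by
  have key : ∀ r w : ℕ, ζ ^ Q ^ (w + r * D) = ζ ^ Q ^ w := by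
    intro r
    induction r with
    | zero => simp
    | succ r ih =>
      intro w
      have h1 : w + (r + 1) * D = (w + r * D) + D := by ring
      rw [h1, pow_add, pow_mul, ih w, ← pow_mul, mul_comm, pow_mul, hc]
  have h1 : s % D + s / D * D = s := Nat.mod_add_div' s D
  have h2 : t % D + t / D * D = t := Nat.mod_add_div' t D
  have hs := key (s / D) (s % D)
  have ht := key (t / D) (t % D)
  rw [h1] at hs; rw [h2] at ht
  have h3 : s % D = t % D := hst
  rw [hs, ht, h3]


/-- **Triviality of a character on the twisted fixed point set.**
For `b` coprime to `d = lcm(d₁, …, dₙ)` and `u : Y → ℤ`, the character `y ↦ yᵘ` is trivial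
on `W_k^{(b)}` if and only if `u` lies in the lattice `(q^k P^{−b} − I)ℤ^N`, i.e. iff there
is `v : Y → ℤ` with `u(i,j) = q^k·v(i, j+b) − v(i,j)` for all `(i,j)`. -/
theorem twistedFixedPoints_char_trivial_iff (p a : ℕ) [Fact p.Prime] (ha : 1 ≤ a)
    (n : ℕ) (hn : 1 ≤ n) (d : Fin n → ℕ) [∀ i, NeZero (d i)]
    (k : ℕ) (hk : 1 ≤ k) (b : ℤ) (hb : IsCoprime b ((Finset.univ.lcm d : ℕ) : ℤ))
    (u : (Σ i : Fin n, ZMod (d i)) → ℤ) :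
    (∀ y ∈ twistedFixedPoints p a n d k b,
        (∏ y' : Σ i : Fin n, ZMod (d i), y y' ^ u y') = (1 : (AlgebraicClosure (ZMod p))ˣ)) ↔
      ∃ v : (Σ i : Fin n, ZMod (d i)) → ℤ, ∀ (i : Fin n) (j : ZMod (d i)),
        u ⟨i, j⟩ = ((p : ℤ) ^ a) ^ k * v ⟨i, j + (b : ZMod (d i))⟩ - v ⟨i, j⟩ := by
  classical
  set K := AlgebraicClosure (ZMod p) with hK
  have hp : p.Prime := Fact.out
  set Qn : ℕ := (p ^ a) ^ k with hQn
  have hQ1 : 1 < Qn := by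
    have h2 := hp.two_le
    exact Nat.one_lt_pow (by omega) (Nat.one_lt_pow (by omega) (by omega))
  have hQz : (((p : ℤ) ^ a) ^ k) = (Qn : ℤ) := by rw [hQn]; push_cast; ring
  -- `b` is a unit mod each `d i`
  have hcop : ∀ i, IsUnit ((b : ZMod (d i))) := by
    intro i
    have hdvd : ((d i : ℤ)) ∣ ((Finset.univ.lcm d : ℕ) : ℤ) :=
      Int.natCast_dvd_natCast.mpr (Finset.dvd_lcm (Finset.mem_univ i))
    obtain ⟨xx, yy, hxy⟩ := hb.of_isCoprime_of_dvd_right hdvd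
    refine IsUnit.of_mul_eq_one ((xx : ℤ) : ZMod (d i)) ?_
    have h1 := congrArg (fun z : ℤ => ((z : ZMod (d i)))) hxy
    push_cast at h1
    rw [ZMod.natCast_self, mul_zero, add_zero] at h1
    rw [mul_comm]; exact h1
  set β : ∀ i : Fin n, ZMod (d i) := fun i => (b : ZMod (d i)) with hβ
  set f : ∀ i : Fin n, ZMod (d i) → ℕ := fun i j => (Ring.inverse (β i) * j).val with hf
  have hfval : ∀ (i : Fin n) (j : ZMod (d i)), ((f i j : ℕ) : ZMod (d i)) * β i = j := by
    intro i j
    have h1 : ((f i j : ℕ) : ZMod (d i)) = Ring.inverse (β i) * j :=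
      ZMod.natCast_rightInverse _
    rw [h1, mul_comm (Ring.inverse (β i)) j, mul_assoc,
      Ring.inverse_mul_cancel _ (hcop i), mul_one]
  have hflt : ∀ (i : Fin n) (j : ZMod (d i)), f i j < d i := fun i j => ZMod.val_lt _
  have hfofs : ∀ (i : Fin n) (s : ℕ), s < d i → f i ((s : ZMod (d i)) * β i) = s := by
    intro i s hs
    show (Ring.inverse (β i) * ((s : ZMod (d i)) * β i)).val = s
    rw [mul_comm ((s : ZMod (d i))) (β i), ← mul_assoc,
      Ring.inverse_mul_cancel _ (hcop i), one_mul, ZMod.val_cast_of_lt hs]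
  set c : Fin n → ℤ :=
    fun i => ∑ s ∈ Finset.range (d i), (Qn : ℤ) ^ s * u ⟨i, (s : ZMod (d i)) * β i⟩ with hc
  have hsumc : ∀ i : Fin n,
      (∑ j : ZMod (d i), (Qn : ℤ) ^ (f i j) * u ⟨i, j⟩) = c i := by
    intro i
    refine Finset.sum_bij' (fun j _ => f i j) (fun s _ => (s : ZMod (d i)) * β i)
      (fun j _ => Finset.mem_range.mpr (hflt i j)) (fun s _ => Finset.mem_univ _)
      (fun j _ => hfval i j) (fun s hs => hfofs i s (Finset.mem_range.mp hs)) ?_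
    intro j _
    rw [hfval i j]
  constructor
  · -- forward direction
    intro H
    have key : ∀ i : Fin n, ((Qn ^ d i - 1 : ℕ) : ℤ) ∣ c i := by
      intro i0
      have hD0 : 0 < d i0 := Nat.pos_of_ne_zero (NeZero.ne _)
      set D := d i0 with hD
      set m : ℕ := Qn ^ D - 1 with hm
      have hQD : 2 ≤ Qn ^ D := le_trans hQ1 (Nat.le_self_pow hD0.ne' Qn)
      have hm0 : 0 < m := by omega
      have hQDm : Qn ^ D = m + 1 := by omega
      have hpm : ¬ p ∣ m := by
        intro hdvdm
        have h1 : p ∣ Qn := by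
          rw [hQn]; exact dvd_pow (dvd_pow_self p (by omega)) (by omega)
        have h2 : p ∣ Qn ^ D := h1.trans (dvd_pow_self Qn hD0.ne')
        have h3 : p ∣ Qn ^ D - m := Nat.dvd_sub h2 hdvdm
        have h4 : Qn ^ D - m = 1 := by omega
        rw [h4] at h3
        exact absurd (Nat.dvd_one.mp h3) hp.one_lt.ne'
      have hne : NeZero ((m : ℕ) : K) :=
        ⟨fun h => hpm ((CharP.cast_eq_zero_iff K p m).mp h)⟩
      obtain ⟨ζ0, hζ0⟩ := IsAlgClosed.exists_root _
        (Polynomial.degree_cyclotomic_pos m K hm0).ne.symm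
      have hζ0' : IsPrimitiveRoot ζ0 m := Polynomial.isRoot_cyclotomic_iff.mp hζ0
      have hζ : IsPrimitiveRoot ((hζ0'.isUnit hm0.ne').unit) m := hζ0'.isUnit_unit hm0.ne'
      set ζ : Kˣ := (hζ0'.isUnit hm0.ne').unit with hζdef
      have hζcyc : ζ ^ Qn ^ D = ζ := by
        rw [hQDm, pow_succ, hζ.pow_eq_one, one_mul]
      set y : (Σ i : Fin n, ZMod (d i)) → Kˣ :=
        fun z => (if z.1 = i0 then ζ else 1) ^ Qn ^ f z.1 z.2 with hy
      have hyW : y ∈ twistedFixedPoints p a n d k b := by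
        intro i j
        show ((if i = i0 then ζ else 1) ^ Qn ^ f i j) ^ (p ^ a) ^ k
            = (if i = i0 then ζ else 1) ^ Qn ^ f i (j + β i)
        rw [← hQn, ← pow_mul, ← pow_succ]
        by_cases hi : i = i0
        · subst hi
          rw [if_pos rfl]
          refine my_pow_pow_congr ζ Qn D hζcyc ?_
          rw [← ZMod.natCast_eq_natCast_iff]
          refine (hcop i).mul_right_cancel ?_
          push_cast
          rw [add_mul, one_mul, hfval i j, hfval i (j + (b : ZMod (d i)))]
        · rw [if_neg hi, one_pow, one_pow]
      have hprod := H y hyW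
      rw [← Finset.univ_sigma_univ, Finset.prod_sigma] at hprod
      rw [Finset.prod_eq_single i0 (fun i _ hne' => by
          simp only [hy, if_neg hne', one_pow, one_zpow, Finset.prod_const_one])
        (fun h => absurd (Finset.mem_univ i0) h)] at hprod
      have hinner : (∏ j : ZMod (d i0), y ⟨i0, j⟩ ^ u ⟨i0, j⟩) = ζ ^ (c i0) := by
        rw [← hsumc i0, my_zpow_sum]
        refine Finset.prod_congr rfl ?_
        intro j _
        simp only [hy, eq_self_iff_true, if_true]
        rw [← zpow_natCast ζ (Qn ^ f i0 j), ← zpow_mul]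
        push_cast
        ring_nf
      rw [hinner] at hprod
      exact (hζ.zpow_eq_one_iff_dvd _).mp hprod
    have key' : ∀ i : Fin n, ∃ x : ℤ, c i = ((Qn ^ d i - 1 : ℕ) : ℤ) * x := key
    choose x hx using key'
    set g : Fin n → ℕ → ℤ := fun i t =>
      (Qn : ℤ) ^ (d i - t) * x i
        - ∑ s ∈ Finset.Ico t (d i), (Qn : ℤ) ^ (s - t) * u ⟨i, (s : ZMod (d i)) * β i⟩ with hg
    refine ⟨fun z => g z.1 (f z.1 z.2), ?_⟩
    intro i j
    have hD0 : 0 < d i := Nat.pos_of_ne_zero (NeZero.ne _)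
    set t := f i j with ht
    have htD : t < (d i) := hflt i j
    have hjt : (t : ZMod (d i)) * β i = j := hfval i j
    have hnext : f i (j + β i) = (t + 1) % (d i) := by
      have hlt : (t + 1) % (d i) < (d i) := Nat.mod_lt _ hD0
      have hcast : (((t + 1) % (d i) : ℕ) : ZMod (d i)) * β i = j + β i := by
        rw [ZMod.natCast_mod]
        push_cast
        rw [add_mul, one_mul, hjt]
      rw [← hcast]
      exact hfofs i _ hlt
    rw [hQz]
    show u ⟨i, j⟩ = (Qn : ℤ) * g i (f i (j + β i)) - g i (f i j)
    rw [hnext, ← ht]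
    -- two cases
    by_cases hcase : t + 1 < (d i)
    · have hmod : (t + 1) % (d i) = t + 1 := Nat.mod_eq_of_lt hcase
      rw [hmod, hg]
      simp only
      rw [Finset.sum_eq_sum_Ico_succ_bot htD
        (fun s => (Qn : ℤ) ^ (s - t) * u ⟨i, (s : ZMod (d i)) * β i⟩)]
      have e1 : (Qn : ℤ) * ((Qn : ℤ) ^ ((d i) - (t + 1)) * x i) = (Qn : ℤ) ^ ((d i) - t) * x i := by
        rw [← mul_assoc, ← pow_succ']
        congr 2
        omega
      have e2 : (Qn : ℤ) * (∑ s ∈ Finset.Ico (t + 1) (d i),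
            (Qn : ℤ) ^ (s - (t + 1)) * u ⟨i, (s : ZMod (d i)) * β i⟩)
          = ∑ s ∈ Finset.Ico (t + 1) (d i), (Qn : ℤ) ^ (s - t) * u ⟨i, (s : ZMod (d i)) * β i⟩ := by
        rw [Finset.mul_sum]
        refine Finset.sum_congr rfl ?_
        intro s hs
        rw [Finset.mem_Ico] at hs
        rw [← mul_assoc, ← pow_succ']
        congr 2
        omega
      rw [mul_sub, e1, e2, hjt]
      have : t - t = 0 := by omega
      rw [this, pow_zero, one_mul]
      ring
    · have htD1 : t + 1 = (d i) := by omega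
      have hmod : (t + 1) % (d i) = 0 := by rw [htD1, Nat.mod_self]
      rw [hmod, hg]
      simp only
      have hg0 : (Qn : ℤ) ^ ((d i) - 0) * x i
          - ∑ s ∈ Finset.Ico 0 (d i), (Qn : ℤ) ^ (s - 0) * u ⟨i, (s : ZMod (d i)) * β i⟩ = x i := by
        have hsum : ∑ s ∈ Finset.Ico 0 (d i), (Qn : ℤ) ^ (s - 0) * u ⟨i, (s : ZMod (d i)) * β i⟩
            = c i := by
          rw [hc]
          simp only
          rw [← Finset.range_eq_Ico]
          simp only [Nat.sub_zero]
        rw [hsum, hx i]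
        have hcast : ((Qn ^ (d i) - 1 : ℕ) : ℤ) = (Qn : ℤ) ^ (d i) - 1 := by
          have h1 : 1 ≤ Qn ^ (d i) := Nat.one_le_pow _ _ (by omega)
          push_cast [h1]
          ring
        rw [hcast, Nat.sub_zero]
        ring
      rw [hg0]
      have hIco : Finset.Ico t (d i) = {t} := by
        rw [← htD1, Nat.Ico_succ_singleton]
      rw [hIco, Finset.sum_singleton]
      have h1 : (d i) - t = 1 := by omega
      have h2 : t - t = 0 := by omega
      rw [h1, h2, pow_zero, pow_one, one_mul, hjt]
      ring
  · -- backward direction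
    rintro ⟨v, hv⟩ y hyW
    have hy' : ∀ (i : Fin n) (j : ZMod (d i)),
        (y ⟨i, j⟩) ^ (Qn : ℤ) = y ⟨i, j + β i⟩ := by
      intro i j
      rw [zpow_natCast, hQn]
      exact hyW i j
    have step : ∀ z : Σ i : Fin n, ZMod (d i),
        y z ^ u z = (y ⟨z.1, z.2 + β z.1⟩ ^ v ⟨z.1, z.2 + β z.1⟩) * (y z ^ v z)⁻¹ := by
      rintro ⟨i, j⟩
      rw [hv i j, hQz, zpow_sub, zpow_mul, hy' i j]
    rw [Finset.prod_congr rfl (fun z _ => step z), Finset.prod_mul_distrib,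
      Finset.prod_inv_distrib]
    have hre : (∏ z : Σ i : Fin n, ZMod (d i), y ⟨z.1, z.2 + β z.1⟩ ^ v ⟨z.1, z.2 + β z.1⟩)
        = ∏ z : Σ i : Fin n, ZMod (d i), y z ^ v z := by
      exact Equiv.prod_comp (Equiv.sigmaCongrRight (fun i => Equiv.addRight (β i)))
        (fun z => y z ^ v z)
    rw [hre, mul_inv_cancel]
end

section
/- Let V be a finite-dimensional vector space over a field K, let Φ, H : V →ₗ[K] V be linear endomorphisms with H ∘ Φ = Φ ∘ H, and let λ ∈ K be such that Φ − λ·id is nilpotent. Then for every k ≥ 1, trace(H ∘ Φ^k) = λ^k · trace(H). -/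
/-- **Twisted trace on a generalized eigenspace.**
If `Φ, H` are commuting endomorphisms of a finite-dimensional vector space `V` and
`Φ - λ·id` is nilpotent, then `Tr(H ∘ Φ^k) = λ^k · Tr(H)` for every `k ≥ 1`. -/
theorem trace_comp_pow_of_nilpotent_sub_smul_id
    {K V : Type*} [Field K] [AddCommGroup V] [Module K V] [FiniteDimensional K V]
    (Φ H : Module.End K V) (hcomm : H ∘ₗ Φ = Φ ∘ₗ H) (lam : K)
    (hnil : IsNilpotent (Φ - lam • (1 : Module.End K V)))
    (k : ℕ) (hk : 1 ≤ k) :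
    LinearMap.trace K V (H ∘ₗ (Φ ^ k)) = lam ^ k * LinearMap.trace K V H := by
  clear hk
  have hnil' : IsNilpotent (Φ - algebraMap K (Module.End K V) lam) := by
    simpa [Algebra.algebraMap_eq_smul_one] using hnil
  have hc : Commute H Φ := hcomm
  induction k with
  | zero => rw [← Module.End.mul_eq_comp, pow_zero, mul_one, pow_zero, one_mul]
  | succ n ih =>
      have hc' : Commute (H * Φ ^ n) Φ := (hc.mul_left (Commute.pow_left rfl n))
      calc LinearMap.trace K V (H ∘ₗ Φ ^ (n + 1))
          = LinearMap.trace K V ((H * Φ ^ n) ∘ₗ Φ) := by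
            rw [Module.End.mul_eq_comp, LinearMap.comp_assoc, pow_succ,
              Module.End.mul_eq_comp]
        _ = lam * LinearMap.trace K V (H * Φ ^ n) :=
            LinearMap.trace_comp_eq_mul_of_commute_of_isNilpotent lam hc' hnil'
        _ = lam ^ (n + 1) * LinearMap.trace K V H := by
            rw [Module.End.mul_eq_comp, ih, pow_succ]; ring
end

section
/- Let F ∈ K⟦T⟧ have constant coefficient 1. Then (δ_{d_1} ∘ δ_{d_2} ∘ ⋯ ∘ δ_{d_n})(F) = ∏_{I ⊆ {1, …, n}} (rescale(q^{d_I}) F)^{(−1)^{|I|}}, where d_I := Σ_{i ∈ I} d_i (with d_∅ = 0), and the product with integer exponents is taken in the group of units of K⟦T⟧ (power series with constant coefficient 1 are units). -/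
/-- Dwork's `δ_c` operator on units of the power series ring:
`δ_c(F) = F · (rescale(q^c) F)⁻¹`, where `rescale(q^c)` sends `T` to `q^c T`. -/
noncomputable def deltaOp {K : Type*} [CommRing K] (q : K) (c : ℕ) :
    (PowerSeries K)ˣ → (PowerSeries K)ˣ :=
  fun F => F * (Units.map (PowerSeries.rescale (q ^ c)).toMonoidHom F)⁻¹

section Aux

variable {K : Type*} [CommRing K] (q : K)

lemma mapRescale_zero (F : (PowerSeries K)ˣ) :
    Units.map (PowerSeries.rescale (q ^ (0 : ℕ))).toMonoidHom F = F := by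
  ext
  simp [PowerSeries.rescale_one]

lemma mapRescale_add (a b : ℕ) (F : (PowerSeries K)ˣ) :
    Units.map (PowerSeries.rescale (q ^ a)).toMonoidHom
      (Units.map (PowerSeries.rescale (q ^ b)).toMonoidHom F)
      = Units.map (PowerSeries.rescale (q ^ (a + b))).toMonoidHom F := by
  ext
  simp [PowerSeries.rescale_rescale, ← pow_add, Nat.add_comm a b]

lemma prod_powerset_map {β : Type*} [CommMonoid β] {n : ℕ}
    (g : Finset (Fin (n + 1)) → β) :
    ∏ t ∈ ((Finset.univ : Finset (Fin n)).map ⟨Fin.succ, Fin.succ_injective n⟩).powerset,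
        g t = ∏ J : Finset (Fin n), g (J.map ⟨Fin.succ, Fin.succ_injective n⟩) := by
  refine (Finset.prod_bij (fun J _ => J.map ⟨Fin.succ, Fin.succ_injective n⟩) ?_ ?_ ?_ ?_).symm
  · intro J _
    exact Finset.mem_powerset.mpr (Finset.map_subset_map.mpr (Finset.subset_univ J))
  · intro a _ b _ h
    exact Finset.map_injective _ h
  · intro t ht
    obtain ⟨u, -, rfl⟩ := Finset.subset_map_iff.mp (Finset.mem_powerset.mp ht)
    exact ⟨u, Finset.mem_univ u, rfl⟩
  · intro J _
    rfl

lemma deltaOp_aux (n : ℕ) (d : Fin n → ℕ) (F : (PowerSeries K)ˣ) :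
    (((List.finRange n).map fun i => deltaOp q (d i)).foldr (· ∘ ·) id) F =
      ∏ I : Finset (Fin n),
        (Units.map (PowerSeries.rescale (q ^ (∑ i ∈ I, d i))).toMonoidHom F)
          ^ ((-1 : ℤ) ^ I.card) := by
  induction n with
  | zero =>
      simp only [List.finRange_zero, List.map_nil, List.foldr_nil, id_eq]
      rw [Fintype.prod_unique]
      have hd0 : (default : Finset (Fin 0)) = ∅ := Subsingleton.elim _ _
      rw [hd0]
      simp [mapRescale_zero q F]
  | succ n ih =>
      rw [List.finRange_succ, List.map_cons, List.foldr_cons, List.map_map]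
      have LHS := ih (fun i => d i.succ)
      simp only [Function.comp_def] at LHS ⊢
      rw [LHS]
      -- rewrite the RHS product over subsets of `Fin (n+1)`
      conv_rhs => rw [← Finset.powerset_univ, Fin.univ_succ, Finset.cons_eq_insert,
        Finset.prod_powerset_insert (by simp), prod_powerset_map, prod_powerset_map]
      -- simplify the two subset products
      have h1 : ∀ J : Finset (Fin n),
          (Units.map (PowerSeries.rescale
              (q ^ (∑ i ∈ J.map ⟨Fin.succ, Fin.succ_injective n⟩, d i))).toMonoidHom F)
            ^ ((-1 : ℤ) ^ (J.map ⟨Fin.succ, Fin.succ_injective n⟩).card)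
          = (Units.map (PowerSeries.rescale
              (q ^ (∑ i ∈ J, d i.succ))).toMonoidHom F) ^ ((-1 : ℤ) ^ J.card) := by
        intro J
        rw [Finset.sum_map, Finset.card_map]
        rfl
      have h0 : ∀ J : Finset (Fin n),
          (0 : Fin (n + 1)) ∉ J.map ⟨Fin.succ, Fin.succ_injective n⟩ := by
        intro J hJ
        obtain ⟨j, -, hj⟩ := Finset.mem_map.mp hJ
        exact Fin.succ_ne_zero j hj
      have h2 : ∀ J : Finset (Fin n),
          (Units.map (PowerSeries.rescale
              (q ^ (∑ i ∈ insert 0 (J.map ⟨Fin.succ, Fin.succ_injective n⟩), d i))).toMonoidHom F)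
            ^ ((-1 : ℤ) ^ (insert (0 : Fin (n+1)) (J.map ⟨Fin.succ, Fin.succ_injective n⟩)).card)
          = (Units.map (PowerSeries.rescale
              (q ^ (d 0 + ∑ i ∈ J, d i.succ))).toMonoidHom F)
              ^ (-((-1 : ℤ) ^ J.card)) := by
        intro J
        rw [Finset.sum_insert (h0 J), Finset.card_insert_of_notMem (h0 J),
          Finset.sum_map, Finset.card_map, pow_succ, mul_neg_one]
        rfl
      rw [Finset.prod_congr rfl fun J _ => h1 J, Finset.prod_congr rfl fun J _ => h2 J]
      -- now compute the left-hand side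
      show deltaOp q (d 0) _ = _
      rw [deltaOp]
      congr 1
      rw [map_prod, ← Finset.prod_inv_distrib]
      refine Finset.prod_congr rfl fun J _ => ?_
      rw [map_zpow, mapRescale_add, ← zpow_neg]

end Aux

/-- **Subset expansion of the partial `δ_d`-operator.**
For a power series `F` with constant coefficient `1` (a unit of `K⟦T⟧`),
`(δ_{d₁} ∘ ⋯ ∘ δ_{dₙ})(F) = ∏_{I ⊆ {1,…,n}} (rescale(q^{d_I}) F)^{(−1)^{|I|}}`,
the product with integer exponents taken in the unit group of `K⟦T⟧`. -/
theorem deltaOp_comp_eq_prod_subsets {K : Type*} [CommRing K] (q : K)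
    (n : ℕ) (hn : 1 ≤ n) (d : Fin n → ℕ) (hd : ∀ i, 0 < d i)
    (F : (PowerSeries K)ˣ) (hF : PowerSeries.constantCoeff (F : PowerSeries K) = 1) :
    (((List.finRange n).map fun i => deltaOp q (d i)).foldr (· ∘ ·) id) F =
      ∏ I : Finset (Fin n),
        (Units.map (PowerSeries.rescale (q ^ (∑ i ∈ I, d i))).toMonoidHom F)
          ^ ((-1 : ℤ) ^ I.card) := by
  exact deltaOp_aux q n d F
end

section
/- Let λ : ℕ → K be injective with λ_i ≠ 0 for all i and ‖λ_i‖ → 0 as i → ∞, and let c : ℕ → K be bounded (there is C with ‖c_i‖ ≤ C for all i). If for every integer k ≥ 1 the family (c_i · λ_i^k)_{i ∈ ℕ} is summable with Σ_{i} c_i λ_i^k = 0, then c_i = 0 for every i. -/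
open Filter

open Finset Polynomial in
private lemma na_norm_finset_sum_le {K : Type*} [NormedField K] {ι : Type*}
    (hna : IsNonarchimedean (fun x : K => ‖x‖)) (s : Finset ι) (f : ι → K)
    (B : ℝ) (hB : 0 ≤ B) (h : ∀ i, ‖f i‖ ≤ B) : ‖∑ i ∈ s, f i‖ ≤ B := by
  classical
  induction s using Finset.induction with
  | empty => simpa using hB
  | insert _ _ hx ih =>
      rw [Finset.sum_insert hx]
      exact le_trans (hna _ _) (max_le (h _) ih)

private lemma na_norm_tsum_le {K : Type*} [NormedField K] {ι : Type*}
    (hna : IsNonarchimedean (fun x : K => ‖x‖)) (f : ι → K) (hf : Summable f)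
    (B : ℝ) (hB : 0 ≤ B) (h : ∀ i, ‖f i‖ ≤ B) : ‖∑' i, f i‖ ≤ B := by
  have h1 : Tendsto (fun s : Finset ι => ‖∑ i ∈ s, f i‖) atTop (nhds ‖∑' i, f i‖) :=
    (continuous_norm.tendsto _).comp hf.hasSum
  exact le_of_tendsto' h1 fun s => na_norm_finset_sum_le hna s f B hB h


open Finset Polynomial in
/-- **Vanishing of the coefficients of a null generalized Dirichlet expansion.**
Over a complete nonarchimedean normed field, if `λᵢ` are distinct nonzero elements with
`‖λᵢ‖ → 0`, `cᵢ` is bounded, and `Σᵢ cᵢ λᵢ^k = 0` (a summable family) for every `k ≥ 1`,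
then every `cᵢ = 0`. -/
theorem eq_zero_of_tsum_smul_pow_eq_zero
    {K : Type*} [NormedField K] [CompleteSpace K]
    (hna : IsNonarchimedean (fun x : K => ‖x‖))
    (lam : ℕ → K) (hinj : Function.Injective lam) (hne : ∀ i, lam i ≠ 0)
    (hlim : Tendsto (fun i => ‖lam i‖) atTop (nhds 0))
    (c : ℕ → K) (C : ℝ) (hbdd : ∀ i, ‖c i‖ ≤ C)
    (hsum : ∀ k : ℕ, 1 ≤ k → Summable (fun i => c i * lam i ^ k))
    (hzero : ∀ k : ℕ, 1 ≤ k → ∑' i, c i * lam i ^ k = 0) :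
    ∀ i, c i = 0 := by
  classical
  intro i₀
  by_contra hc0
  have hC : 0 ≤ C := le_trans (norm_nonneg _) (hbdd 0)
  set r : ℝ := ‖lam i₀‖ with hrdef
  have hrpos : 0 < r := norm_pos_iff.2 (hne i₀)
  -- finiteness of {i | ε ≤ ‖lam i‖}
  have hfin : ∀ ε : ℝ, 0 < ε → {i : ℕ | ε ≤ ‖lam i‖}.Finite := by
    intro ε hε
    have h1 : ∀ᶠ i in atTop, ‖lam i‖ < ε := hlim.eventually (gt_mem_nhds hε)
    rw [← Nat.cofinite_eq_atTop] at h1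
    have := Filter.eventually_cofinite.mp h1
    exact this.subset fun i hi => by simpa using not_lt.2 hi
  set S : Finset ℕ := (hfin r hrpos).toFinset with hSdef
  have hmemS : ∀ i, i ∈ S ↔ r ≤ ‖lam i‖ := by
    intro i; simp [hSdef, Set.Finite.mem_toFinset]
  have hi₀S : i₀ ∈ S := (hmemS i₀).2 le_rfl
  set T : Finset ℕ := (hfin (r / 2) (by positivity)).toFinset with hTdef
  set r' : ℝ := Finset.fold max (r / 2) (fun i => ‖lam i‖) (T \ S) with hr'def
  have hr'lt : r' < r := by
    rw [hr'def, Finset.fold_max_lt]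
    refine ⟨by linarith, fun i hi => ?_⟩
    have : i ∉ S := (Finset.mem_sdiff.mp hi).2
    exact lt_of_not_ge fun h => this ((hmemS i).2 h)
  have hr'nonneg : 0 ≤ r' := by
    rw [hr'def]
    exact (Finset.le_fold_max _).2 (Or.inl (by linarith))
  have hr'bound : ∀ i, i ∉ S → ‖lam i‖ ≤ r' := by
    intro i hiS
    by_cases hiT : i ∈ T
    · exact (Finset.le_fold_max _).2 (Or.inr ⟨i, Finset.mem_sdiff.2 ⟨hiT, hiS⟩, le_rfl⟩)
    · have : ¬ (r / 2 ≤ ‖lam i‖) := fun h => hiT (by simp [hTdef, Set.Finite.mem_toFinset, h])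
      rw [hr'def]
      exact le_trans (le_of_not_ge this) ((Finset.le_fold_max _).2 (Or.inl le_rfl) : r/2 ≤ _)
  -- interpolation polynomial
  set P : K[X] := Lagrange.interpolate S lam (fun i => if i = i₀ then 1 else 0) with hPdef
  have hPnode : ∀ i ∈ S, P.eval (lam i) = if i = i₀ then 1 else 0 := fun i hi =>
    Lagrange.eval_interpolate_at_node _ (hinj.injOn) hi
  set n : ℕ := P.natDegree with hndef
  set A : ℝ := ∑ j ∈ range (n + 1), ‖P.coeff j‖ * r ^ j with hAdef
  have hA : 0 ≤ A := Finset.sum_nonneg fun j _ => by positivity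
  have hPeval : ∀ x : K, ‖x‖ ≤ r → ‖P.eval x‖ ≤ A := by
    intro x hx
    rw [eval_eq_sum_range, hAdef]
    refine le_trans (norm_sum_le _ _) (Finset.sum_le_sum fun j _ => ?_)
    rw [norm_mul, norm_pow]
    exact mul_le_mul_of_nonneg_left (pow_le_pow_left₀ (norm_nonneg x) hx j) (norm_nonneg _)
  -- key estimate for each k ≥ 1
  have key : ∀ k : ℕ, 1 ≤ k → ‖c i₀‖ * r ^ k ≤ C * A * r' ^ k := by
    intro k hk
    set g : ℕ → K := fun i => c i * lam i ^ k * P.eval (lam i) with hgdef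
    have hgeq : g = fun i => ∑ j ∈ range (n + 1), P.coeff j * (c i * lam i ^ (k + j)) := by
      funext i
      rw [hgdef]
      simp only
      rw [eval_eq_sum_range, Finset.mul_sum]
      exact Finset.sum_congr rfl fun j _ => by rw [pow_add]; ring
    have hgsum : Summable g := by
      rw [hgeq]
      exact summable_sum fun j _ => (hsum (k + j) (by omega)).mul_left _
    have hgtsum : ∑' i, g i = 0 := by
      rw [hgeq, Summable.tsum_finsetSum fun j _ => (hsum (k + j) (by omega)).mul_left _]
      refine Finset.sum_eq_zero fun j _ => ?_
      rw [tsum_mul_left, hzero (k + j) (by omega), mul_zero]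
    have hsplit : ∑ i ∈ S, g i + ∑' (i : ↑((↑S : Set ℕ)ᶜ)), g ↑i = 0 := by
      rw [Summable.sum_add_tsum_compl hgsum, hgtsum]
    have hSsum : ∑ i ∈ S, g i = c i₀ * lam i₀ ^ k := by
      rw [Finset.sum_eq_single i₀]
      · rw [hgdef]; simp only; rw [hPnode i₀ hi₀S, if_pos rfl, mul_one]
      · intro i hi hine
        rw [hgdef]; simp only; rw [hPnode i hi, if_neg hine, mul_zero]
      · intro h; exact absurd hi₀S h
    have heq : c i₀ * lam i₀ ^ k = -∑' (i : ↑((↑S : Set ℕ)ᶜ)), g ↑i :=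
      eq_neg_of_add_eq_zero_left (hSsum ▸ hsplit)
    have htail : ‖∑' (i : ↑((↑S : Set ℕ)ᶜ)), g ↑i‖ ≤ C * A * r' ^ k := by
      refine na_norm_tsum_le hna _ (hgsum.subtype _) _ (by positivity) ?_
      rintro ⟨i, hi⟩
      have hiS : i ∉ S := by simpa using hi
      have h1 : ‖lam i‖ ≤ r' := hr'bound i hiS
      have h2 : ‖P.eval (lam i)‖ ≤ A := hPeval _ (le_trans h1 hr'lt.le)
      calc ‖g i‖ = ‖c i‖ * ‖lam i‖ ^ k * ‖P.eval (lam i)‖ := by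
              rw [hgdef]; simp [norm_mul, norm_pow]
        _ ≤ C * r' ^ k * A := by
              refine mul_le_mul (mul_le_mul (hbdd i) (pow_le_pow_left₀ (norm_nonneg _) h1 k)
                (by positivity) hC) h2 (norm_nonneg _) (by positivity)
        _ = C * A * r' ^ k := by ring
    calc ‖c i₀‖ * r ^ k = ‖c i₀ * lam i₀ ^ k‖ := by rw [norm_mul, norm_pow]
      _ = ‖-∑' (i : ↑((↑S : Set ℕ)ᶜ)), g ↑i‖ := by rw [heq]
      _ = ‖∑' (i : ↑((↑S : Set ℕ)ᶜ)), g ↑i‖ := norm_neg _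
      _ ≤ C * A * r' ^ k := htail
  -- conclude
  have hratio : 0 ≤ r' / r ∧ r' / r < 1 :=
    ⟨div_nonneg hr'nonneg hrpos.le, (div_lt_one hrpos).2 hr'lt⟩
  have hlim2 : Tendsto (fun k : ℕ => C * A * (r' / r) ^ k) atTop (nhds 0) := by
    have := (tendsto_pow_atTop_nhds_zero_of_lt_one hratio.1 hratio.2).const_mul (C * A)
    simpa using this
  have hle : ‖c i₀‖ ≤ 0 := by
    refine ge_of_tendsto hlim2 ?_
    filter_upwards [eventually_ge_atTop 1] with k hk
    have h1 : ‖c i₀‖ * r ^ k ≤ C * A * r' ^ k := key k hk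
    have h2 : (0:ℝ) < r ^ k := by positivity
    rw [div_pow, ← mul_div_assoc, le_div_iff₀ h2]
    exact h1
  exact hc0 (norm_le_zero_iff.mp hle)
end

section
/- Assume γ ∈ K satisfies ‖γ‖ = p^{−1/(p−1)} and the family (γ^{p^i}/p^i)_{i ≥ 0} is summable in K with Σ_{i=0}^∞ γ^{p^i}/p^i = 0. Then for every m ≥ 0, the partial sum γ_m := Σ_{i=0}^m γ^{p^i}/p^i satisfies ‖γ_m‖ = p^{−(p^{m+1}/(p−1) − (m+1))}, i.e. ord_p(γ_m) = p^{m+1}/(p−1) − (m+1). -/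
open Real

private lemma na_add_eq_left {K : Type*} [NormedField K]
    (hna : IsNonarchimedean (fun x : K => ‖x‖)) {a b : K} (h : ‖b‖ < ‖a‖) :
    ‖a + b‖ = ‖a‖ := by
  apply le_antisymm ((hna a b).trans (max_le le_rfl h.le))
  have : ‖a‖ ≤ max ‖a + b‖ ‖b‖ := by
    have := hna (a + b) (-b)
    simpa using this
  rcases max_cases ‖a + b‖ ‖b‖ with ⟨he, _⟩ | ⟨he, _⟩
  · rwa [he] at this
  · rw [he] at this; exact absurd h (not_lt.mpr this)

/-- **Valuation of the partial sums of the Artin–Hasse logarithm at its root `γ`.**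
If `‖γ‖ = p^{-1/(p-1)}` and `Σ_{i≥0} γ^{pⁱ}/pⁱ = 0` (a summable family), then the partial
sum `γ_m = Σ_{i=0}^m γ^{pⁱ}/pⁱ` satisfies `ord_p(γ_m) = p^{m+1}/(p-1) - (m+1)`, i.e.
`‖γ_m‖ = p^{-(p^{m+1}/(p-1) - (m+1))}`. -/
theorem norm_partialSum_artinHasse_log
    {K : Type*} [NormedField K] [CompleteSpace K] [CharZero K]
    (p : ℕ) (hp : p.Prime)
    (hna : IsNonarchimedean (fun x : K => ‖x‖))
    (hpnorm : ‖(p : K)‖ = (p : ℝ)⁻¹)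
    (γ : K) (hγ : ‖γ‖ = (p : ℝ) ^ (-(1 / ((p : ℝ) - 1))))
    (hsum : Summable (fun i : ℕ => γ ^ p ^ i / (p : K) ^ i))
    (hzero : ∑' i : ℕ, γ ^ p ^ i / (p : K) ^ i = 0)
    (m : ℕ) :
    ‖∑ i ∈ Finset.range (m + 1), γ ^ p ^ i / (p : K) ^ i‖
      = (p : ℝ) ^ (-(((p : ℝ) ^ (m + 1)) / ((p : ℝ) - 1) - (m + 1))) := by
  have hpR : (1 : ℝ) < (p : ℝ) := by exact_mod_cast hp.one_lt
  have hp0 : (0 : ℝ) < p := by positivity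
  have hp1 : (0 : ℝ) < (p : ℝ) - 1 := by linarith
  set f : ℕ → K := fun i => γ ^ p ^ i / (p : K) ^ i with hf
  set v : ℕ → ℝ := fun i => (p : ℝ) ^ i / ((p : ℝ) - 1) - i with hv
  -- norm of each term
  have hnorm : ∀ i : ℕ, ‖f i‖ = (p : ℝ) ^ (-(v i)) := by
    intro i
    have h1 : ‖γ ^ p ^ i‖ = (p : ℝ) ^ (-((p : ℝ) ^ i / ((p : ℝ) - 1))) := by
      rw [norm_pow, hγ, ← Real.rpow_natCast ((p : ℝ) ^ (-(1 / ((p : ℝ) - 1)))) (p ^ i),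
        ← Real.rpow_mul hp0.le]
      congr 1
      push_cast
      ring
    have h2 : ‖(p : K) ^ i‖ = (p : ℝ) ^ (-(i : ℝ)) := by
      rw [norm_pow, hpnorm, ← Real.rpow_neg_one, ← Real.rpow_natCast _ i, ← Real.rpow_mul hp0.le]
      ring_nf
    rw [hf]
    simp only [norm_div, h1, h2, ← Real.rpow_sub hp0]
    congr 1
    simp [hv]
    ring
  -- v is strictly increasing from index 1 on
  have hvlt : ∀ i j : ℕ, 1 ≤ i → i < j → v i < v j := by
    intro i j hi hij
    have : ∀ k : ℕ, 1 ≤ k → v k < v (k + 1) := by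
      intro k hk
      simp only [hv]
      have h2 : (1 : ℝ) < (p : ℝ) ^ k := by
        calc (1:ℝ) < p := hpR
        _ ≤ (p:ℝ) ^ k := le_self_pow₀ hpR.le (by omega)
      push_cast
      have e : (p:ℝ) ^ k * p / ((p:ℝ) - 1) - (p:ℝ) ^ k / ((p:ℝ) - 1) = (p:ℝ) ^ k := by
        field_simp
      rw [show (p : ℝ) ^ (k + 1) = (p : ℝ) ^ k * p from pow_succ _ _]
      linarith
    have hm : StrictMono (fun k => v (k + 1)) :=
      strictMono_nat_of_lt_succ (fun k => this (k + 1) (by omega))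
    have h2 := hm (show i - 1 < j - 1 by omega)
    simpa only [Nat.sub_add_cancel hi, Nat.sub_add_cancel (show 1 ≤ j by omega)] using h2
  have ultra : IsUltrametricDist K :=
    IsUltrametricDist.isUltrametricDist_of_isNonarchimedean_norm hna
  -- partial sum = - tail
  have htail := Summable.sum_add_tsum_nat_add (f := f) (m + 1) hsum
  rw [hzero] at htail
  have hS : ∑ i ∈ Finset.range (m + 1), f i = -∑' i, f (i + (m + 1)) := by
    linear_combination htail
  -- tail = first term + rest
  have hshift : (∑' i, f (i + (m + 1))) = f (m + 1) + ∑' i, f (i + 1 + (m + 1)) := by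
    have hs2 : Summable (fun i => f (i + (m + 1))) := (summable_nat_add_iff (m + 1)).mpr hsum
    rw [Summable.tsum_eq_zero_add hs2]
    simp
  -- bound on the rest
  have hrest : ‖∑' i, f (i + 1 + (m + 1))‖ < ‖f (m + 1)‖ := by
    have hbound : ∀ i : ℕ, ‖f (i + 1 + (m + 1))‖ ≤ (p : ℝ) ^ (-(v (m + 2))) := by
      intro i
      rw [hnorm]
      apply Real.rpow_le_rpow_of_exponent_le hpR.le
      have : v (m + 2) ≤ v (i + 1 + (m + 1)) := by
        rcases Nat.lt_or_ge (m + 2) (i + 1 + (m + 1)) with h | h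
        · exact (hvlt (m + 2) (i + 1 + (m + 1)) (by omega) h).le
        · have : i + 1 + (m + 1) = m + 2 := by omega
          rw [this]
      linarith
    calc ‖∑' i, f (i + 1 + (m + 1))‖ ≤ (p : ℝ) ^ (-(v (m + 2))) :=
          IsUltrametricDist.norm_tsum_le_of_forall_le_of_nonneg
            (Real.rpow_nonneg hp0.le _) hbound
      _ < (p : ℝ) ^ (-(v (m + 1))) :=
          Real.rpow_lt_rpow_of_exponent_lt hpR
            (by have := hvlt (m + 1) (m + 2) (by omega) (by omega); linarith)
      _ = ‖f (m + 1)‖ := (hnorm _).symm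
  have key : ‖∑ i ∈ Finset.range (m + 1), f i‖ = ‖f (m + 1)‖ := by
    rw [hS, norm_neg, hshift, na_add_eq_left hna hrest]
  rw [key, hnorm]
  congr 1
  simp only [hv]
  push_cast
  ring
end
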